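/- Let γ > 0, Λ ≥ 1, Λ₁ > 0, and let ε, ε̂, μ, μ̂ be positive real constants with Λ⁻¹ ≤ ε, μ, ε̂, μ̂ ≤ Λ, |ε − ε̂| ≥ Λ₁, and |ε/μ − ε̂/μ̂| ≥ Λ₁. Let α ∈ ℂ with α² ∈ ℝ and |α| = 1 (so α² = ±1), and let k ∈ ℂ with |Im(k²)| ≥ γ|k|² and |Im(α²k²)| ≥ γ|k|² and |k| ≥ 1. Then there is a constant C > 0, depending only on γ, Λ, Λ₁, such that for all ξ ∈ ℝ², |(α²ε̂² − ε²)|ξ|² + α²k² ε ε̂ μ μ̂ (ε̂/μ̂ − ε/μ)| ≥ C(|ξ|² + |k|²). -/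

import Mathlib

/-- Non-degeneracy estimate (pro-HS-em):
`|(α²ε̂² − ε²)|ξ|² + α²k² ε ε̂ μ μ̂ (ε̂/μ̂ − ε/μ)| ≥ C(|ξ|² + |k|²)`. -/
theorem stmt_1 (γ Λ Λ₁ : ℝ) (hγ : 0 < γ) (hΛ : 1 ≤ Λ) (hΛ₁ : 0 < Λ₁) :
    ∃ C > 0, ∀ (ε μ εh μh : ℝ) (α k : ℂ),
      Λ⁻¹ ≤ ε → ε ≤ Λ → Λ⁻¹ ≤ μ → μ ≤ Λ →
      Λ⁻¹ ≤ εh → εh ≤ Λ → Λ⁻¹ ≤ μh → μh ≤ Λ →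
      Λ₁ ≤ |ε - εh| → Λ₁ ≤ |ε / μ - εh / μh| →
      (α ^ 2).im = 0 → ‖α‖ = 1 →
      γ * ‖k‖ ^ 2 ≤ |(k ^ 2).im| →
      γ * ‖k‖ ^ 2 ≤ |(α ^ 2 * k ^ 2).im| →
      1 ≤ ‖k‖ →
      ∀ ξ : EuclideanSpace ℝ (Fin 2),
        C * (‖ξ‖ ^ 2 + ‖k‖ ^ 2) ≤
          ‖(α ^ 2 * (εh : ℂ) ^ 2 - (ε : ℂ) ^ 2) * ((‖ξ‖ ^ 2 : ℝ) : ℂ) +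
            α ^ 2 * k ^ 2 * (ε : ℂ) * (εh : ℂ) * (μ : ℂ) * (μh : ℂ) *
              ((εh / μh - ε / μ : ℝ) : ℂ)‖ := by
  have hΛ0 : (0:ℝ) < Λ := lt_of_lt_of_le one_pos hΛ
  set c₁ : ℝ := min (2*Λ₁/Λ) (2/Λ^2) with hc₁def
  set c₂ : ℝ := γ*Λ₁/Λ^4 with hc₂def
  set c₃ : ℝ := 2*Λ^6 with hc₃def
  have hc₁0 : 0 < c₁ := by rw [hc₁def]; positivity
  have hc₂0 : 0 < c₂ := by rw [hc₂def]; positivity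
  have hc₃0 : 0 < c₃ := by rw [hc₃def]; positivity
  set lam : ℝ := c₂/(2*c₃) with hlamdef
  have hlam0 : 0 < lam := by rw [hlamdef]; positivity
  refine ⟨min (lam*c₁) (c₂/2) / (1+lam), by positivity, ?_⟩
  intro ε μ εh μh α k hε1 hε2 hμ1 hμ2 hεh1 hεh2 hμh1 hμh2 hdiff hdiv hαim hαabs hk1 hk2 hk3 ξ
  have hΛi : (0:ℝ) < Λ⁻¹ := by positivity
  have hε0 : 0 < ε := lt_of_lt_of_le hΛi hε1
  have hμ0 : 0 < μ := lt_of_lt_of_le hΛi hμ1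
  have hεh0 : 0 < εh := lt_of_lt_of_le hΛi hεh1
  have hμh0 : 0 < μh := lt_of_lt_of_le hΛi hμh1
  -- α² = ±1
  have habs2 : ‖α^2‖ = 1 := by rw [norm_pow, hαabs, one_pow]
  set a : ℝ := (α^2).re with hadef
  have hα : α^2 = (a:ℂ) := by
    apply Complex.ext
    · simp [hadef]
    · simpa using hαim
  have haabs : |a| = 1 := by
    rw [hα] at habs2; simpa using habs2
  have haa : a = 1 ∨ a = -1 := abs_eq (by norm_num : (0:ℝ) ≤ 1) |>.mp haabs
  rw [hα]
  set s : ℝ := ‖ξ‖^2 with hsdef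
  have hs0 : 0 ≤ s := by positivity
  set K : ℝ := ‖k‖ ^ 2 with hKdef
  have hK0 : 0 ≤ K := by positivity
  set P : ℝ := ε*εh*μ*μh*(εh/μh - ε/μ) with hPdef
  set z : ℂ := ((a:ℂ) * (εh : ℂ) ^ 2 - (ε : ℂ) ^ 2) * ((s : ℝ) : ℂ) +
      (a:ℂ) * k ^ 2 * (ε : ℂ) * (εh : ℂ) * (μ : ℂ) * (μh : ℂ) *
        ((εh / μh - ε / μ : ℝ) : ℂ) with hzdef
  have hzre : z.re = (a*εh^2 - ε^2)*s + a*(k^2).re*P := by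
    simp only [hzdef, hPdef, ← Complex.ofReal_pow, Complex.add_re, Complex.mul_re,
      Complex.mul_im, Complex.sub_re, Complex.sub_im, Complex.ofReal_re, Complex.ofReal_im]
    ring
  have hzim : z.im = a*(k^2).im*P := by
    simp only [hzdef, hPdef, ← Complex.ofReal_pow, Complex.add_im, Complex.mul_re,
      Complex.mul_im, Complex.sub_re, Complex.sub_im, Complex.ofReal_re, Complex.ofReal_im]
    ring
  clear_value z
  -- bounds on P
  have hprod1 : Λ⁻¹*Λ⁻¹*Λ⁻¹*Λ⁻¹ ≤ ε*εh*μ*μh := by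
    gcongr <;> positivity
  have hprod2 : ε*εh*μ*μh ≤ Λ*Λ*Λ*Λ := by
    gcongr <;> positivity
  have hprodpos : 0 < ε*εh*μ*μh := by positivity
  have hD1 : Λ₁ ≤ |εh/μh - ε/μ| := by rw [abs_sub_comm]; exact hdiv
  have hone : (1:ℝ) ≤ Λ*μh := by
    have := mul_le_mul_of_nonneg_left hμh1 hΛ0.le
    rwa [mul_inv_cancel₀ hΛ0.ne'] at this
  have hone' : (1:ℝ) ≤ Λ*μ := by
    have := mul_le_mul_of_nonneg_left hμ1 hΛ0.le
    rwa [mul_inv_cancel₀ hΛ0.ne'] at this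
  have hD2 : |εh/μh - ε/μ| ≤ 2*Λ^2 := by
    have h1 : εh/μh ≤ Λ^2 := by
      rw [div_le_iff₀ hμh0]
      linarith [mul_le_mul_of_nonneg_left hone hΛ0.le, hεh2]
    have h2 : ε/μ ≤ Λ^2 := by
      rw [div_le_iff₀ hμ0]
      linarith [mul_le_mul_of_nonneg_left hone' hΛ0.le, hε2]
    have h3 : 0 ≤ εh/μh := by positivity
    have h4 : 0 ≤ ε/μ := by positivity
    rw [abs_sub_le_iff]
    constructor <;> linarith
  have hPabs : |P| = (ε*εh*μ*μh) * |εh/μh - ε/μ| := by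
    rw [hPdef, abs_mul, abs_of_pos hprodpos]
  have hP1 : Λ₁/Λ^4 ≤ |P| := by
    rw [hPabs]
    calc Λ₁/Λ^4 = (Λ⁻¹*Λ⁻¹*Λ⁻¹*Λ⁻¹) * Λ₁ := by rw [div_eq_mul_inv, ← inv_pow]; ring
    _ ≤ (ε*εh*μ*μh) * |εh/μh - ε/μ| :=
        mul_le_mul hprod1 hD1 hΛ₁.le hprodpos.le
  have hP2 : |P| ≤ c₃ := by
    rw [hPabs, hc₃def]
    calc (ε*εh*μ*μh) * |εh/μh - ε/μ| ≤ (Λ*Λ*Λ*Λ) * (2*Λ^2) :=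
        mul_le_mul hprod2 hD2 (abs_nonneg _) (by positivity)
    _ = 2*Λ^6 := by ring
  -- lower bound on the coefficient of s
  have hr : c₁ ≤ |a*εh^2 - ε^2| := by
    rcases haa with h | h
    · rw [h]
      have heq : (1:ℝ)*εh^2 - ε^2 = (εh - ε)*(εh + ε) := by ring
      rw [heq, abs_mul]
      have h1 : Λ₁ ≤ |εh - ε| := by rw [abs_sub_comm]; exact hdiff
      have h2 : Λ⁻¹ + Λ⁻¹ ≤ |εh + ε| := by
        rw [abs_of_pos (by positivity)]; linarith
      have h3 : Λ₁ * (Λ⁻¹ + Λ⁻¹) ≤ |εh - ε| * |εh + ε| :=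
        mul_le_mul h1 h2 (by positivity) (abs_nonneg _)
      have h4 : c₁ ≤ 2*Λ₁/Λ := min_le_left _ _
      have h5 : Λ₁ * (Λ⁻¹ + Λ⁻¹) = 2*Λ₁/Λ := by field_simp; ring
      linarith
    · rw [h]
      have heq : (-1:ℝ)*εh^2 - ε^2 = -(εh^2 + ε^2) := by ring
      rw [heq, abs_neg, abs_of_pos (by positivity)]
      have h1 : Λ⁻¹^2 ≤ εh^2 := pow_le_pow_left₀ (by positivity) hεh1 2
      have h2 : Λ⁻¹^2 ≤ ε^2 := pow_le_pow_left₀ (by positivity) hε1 2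
      have h4 : c₁ ≤ 2/Λ^2 := min_le_right _ _
      have h5 : Λ⁻¹^2 + Λ⁻¹^2 = 2/Λ^2 := by rw [inv_pow]; ring
      linarith
  -- bounds on k²
  have hkre : |(k^2).re| ≤ K := by
    rw [hKdef, ← norm_pow]
    exact Complex.abs_re_le_norm _
  -- imaginary part lower bound
  have h2 : c₂*K ≤ |z.im| := by
    rw [hzim, abs_mul, abs_mul, haabs, one_mul]
    calc c₂*K = (γ*K) * (Λ₁/Λ^4) := by rw [hc₂def]; ring
    _ ≤ |(k^2).im| * |P| :=
        mul_le_mul hk1 hP1 (by positivity) (abs_nonneg _)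
  -- real part lower bound
  have h1 : c₁*s - c₃*K ≤ |z.re| := by
    have key : |(a*εh^2 - ε^2)*s| ≤ |z.re| + |a*(k^2).re*P| := by
      have hx : (a*εh^2 - ε^2)*s =
          ((a*εh^2 - ε^2)*s + a*(k^2).re*P) + -(a*(k^2).re*P) := by ring
      rw [hx, ← hzre]
      exact (abs_add_le _ _).trans (by rw [abs_neg])
    have e1 : |(a*εh^2 - ε^2)*s| = |a*εh^2 - ε^2| * s := by
      rw [abs_mul, abs_of_nonneg hs0]
    have e2 : |a*(k^2).re*P| ≤ K*c₃ := by
      rw [abs_mul, abs_mul, haabs, one_mul]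
      exact mul_le_mul hkre hP2 (abs_nonneg _) hK0
    have e3 : c₁*s ≤ |a*εh^2 - ε^2| * s := mul_le_mul_of_nonneg_right hr hs0
    linarith
  -- combine
  have hre : |z.re| ≤ ‖z‖ := Complex.abs_re_le_norm z
  have him : |z.im| ≤ ‖z‖ := Complex.abs_im_le_norm z
  have hlc : lam * c₃ = c₂/2 := by
    rw [hlamdef]
    field_simp [hc₃0.ne']
  clear_value s K P a c₁ c₂ c₃ lam
  rw [div_mul_eq_mul_div, div_le_iff₀ (by positivity : (0:ℝ) < 1+lam)]
  have f1 : min (lam*c₁) (c₂/2) * s ≤ lam*c₁*s :=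
    mul_le_mul_of_nonneg_right (min_le_left _ _) hs0
  have f2 : min (lam*c₁) (c₂/2) * K ≤ (c₂/2)*K :=
    mul_le_mul_of_nonneg_right (min_le_right _ _) hK0
  have f3 : lam*(c₁*s - c₃*K) ≤ lam*|z.re| := mul_le_mul_of_nonneg_left h1 hlam0.le
  have f4 : lam*|z.re| ≤ lam*‖z‖ := mul_le_mul_of_nonneg_left hre hlam0.le
  have f5 : (c₂/2)*K = lam*c₃*K := by rw [hlc]
  linarith
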